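/- For M ∈ [0, (1-√η)²] and β ∈ [0, β_0] with β_0 = 1 - η/(1-√M)², the derivative of λ_1(β) = (r + β + √D)/2 with respect to β is nonpositive, where r = 1 - η + M(1-β), D = (r-β)² - 4M(1-β)². In particular, (1-M)²·D - (∂_β D / 2)² = -4η²M ≤ 0. -/

import Mathlib

open Filter Topology

/-- on `[0,β₀]` the derivative of `λ₁(β) = (r+β+√D)/2` is
nonpositive; in particular the polynomial identity
`(1-M)²·D - (∂_β D/2)² = -4η²M` holds. -/
theorem lambda1_deriv_nonpos (η M : ℝ) (hη : η ∈ Set.Ioc (0:ℝ) 1)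
    (hM : M ∈ Set.Icc (0:ℝ) ((1 - Real.sqrt η)^2))
    (β₀ : ℝ) (hβ₀ : β₀ = 1 - η/(1-Real.sqrt M)^2)
    (D : ℝ → ℝ) (hD : ∀ β, D β = ((1-β)*(1+M) - η)^2 - 4*M*(1-β)^2)
    (f : ℝ → ℝ) (hf : ∀ β, f β = ((1-η+M*(1-β)) + β + Real.sqrt (D β))/2) :
    (∀ β ∈ Set.Icc 0 β₀, deriv f β ≤ 0) ∧
    (∀ β, (1-M)^2 * D β - (-(1-β)*(1-M)^2 + η*(1+M))^2 = -4*η^2*M) := by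
  obtain ⟨hη0, hη1⟩ := hη
  obtain ⟨hM0, hM1⟩ := hM
  have hs0 : 0 ≤ Real.sqrt M := Real.sqrt_nonneg M
  set s := Real.sqrt M with hs_def
  set t := Real.sqrt η with ht_def
  have hsq : s^2 = M := Real.sq_sqrt hM0
  have ht0 : 0 < t := Real.sqrt_pos.mpr hη0
  have htq : t^2 = η := Real.sq_sqrt hη0.le
  have ht1 : t ≤ 1 := by rw [ht_def]; exact Real.sqrt_le_one.mpr hη1
  have hst : s ≤ 1 - t := by
    have h := Real.sqrt_le_sqrt hM1
    rwa [Real.sqrt_sq (by linarith : (0:ℝ) ≤ 1 - t)] at h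
  have hs1 : s < 1 := by linarith
  have h1s : (0:ℝ) < (1-s)^2 := pow_pos (by linarith) 2
  have hηs : η ≤ (1-s)^2 := by
    have h : t ≤ 1 - s := by linarith
    nlinarith
  have hM1' : M < 1 := by nlinarith
  have hβ' : 1 - β₀ = η/(1-s)^2 := by rw [hβ₀]; ring
  have hIdent : ∀ β, (1-M)^2 * D β - (-(1-β)*(1-M)^2 + η*(1+M))^2 = -4*η^2*M := by
    intro β; rw [hD β]; ring
  refine ⟨?_, hIdent⟩
  have hkey : ∀ β, β < β₀ → DifferentiableAt ℝ f β ∧ deriv f β ≤ 0 := by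
    intro β hβ
    have hx : η/(1-s)^2 < 1 - β := by rw [← hβ']; linarith
    have hA : 0 < (1-β)*(1-s)^2 - η := by
      have h := (div_lt_iff₀ h1s).mp hx
      linarith
    have hx0 : 0 < 1 - β := lt_trans (by positivity) hx
    have hDpos : 0 < D β := by
      have hDfac : D β = ((1-β)*(1-s)^2 - η) * ((1-β)*(1-s)^2 - η + 4*s*(1-β)) := by
        rw [hD β, ← hsq]; ring
      rw [hDfac]
      have h4 : 0 ≤ s*(1-β) := mul_nonneg hs0 hx0.le
      exact mul_pos hA (by linarith)
    have hd0 : -(1-β)*(1-M)^2 + η*(1+M) ≤ -(2*η*s) := by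
      rw [← hsq]
      nlinarith [mul_nonneg hA.le (sq_nonneg (1+s))]
    have hdvle : -(1-β)*(1-M)^2 + η*(1+M) ≤ 0 := by
      have h2 : 0 ≤ 2*η*s := by positivity
      linarith
    have hlin : HasDerivAt (fun b:ℝ => 1 - b) (-1) β := (hasDerivAt_id β).const_sub 1
    have h1 : HasDerivAt (fun b:ℝ => (1-b)*(1+M) - η) (-1*(1+M)) β :=
      (hlin.mul_const _).sub_const _
    have hDder : HasDerivAt D (2*(-(1-β)*(1-M)^2 + η*(1+M))) β := by
      have h2 := (h1.pow 2).sub ((hlin.pow 2).const_mul (4*M))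
      have hfun : D = fun b => ((1-b)*(1+M) - η)^2 - 4*M*(1-b)^2 := funext hD
      rw [hfun]
      convert (by exact h2 : HasDerivAt (fun b => ((1-b)*(1+M) - η)^2 - 4*M*(1-b)^2) _ β) using 1
      push_cast
      ring
    have hsqrt : HasDerivAt (fun b => Real.sqrt (D b))
        (2*(-(1-β)*(1-M)^2 + η*(1+M)) / (2*Real.sqrt (D β))) β := hDder.sqrt hDpos.ne'
    have hfder : HasDerivAt f
        ((M*(-1) + 1 + 2*(-(1-β)*(1-M)^2 + η*(1+M))/(2*Real.sqrt (D β)))/2) β := by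
      have hffun : f = fun b => ((1-η+M*(1-b)) + b + Real.sqrt (D b))/2 := funext hf
      rw [hffun]
      exact ((((hlin.const_mul M).const_add (1-η)).add (hasDerivAt_id β)).add hsqrt).div_const 2
    refine ⟨hfder.differentiableAt, ?_⟩
    rw [hfder.deriv]
    have hq0 : 0 < Real.sqrt (D β) := Real.sqrt_pos.mpr hDpos
    have hdub : (1-M)*Real.sqrt (D β) ≤ -(-(1-β)*(1-M)^2 + η*(1+M)) := by
      have e1 : (1-M)*Real.sqrt (D β) = Real.sqrt ((1-M)^2 * D β) := by
        rw [Real.sqrt_mul (sq_nonneg _), Real.sqrt_sq (by linarith : (0:ℝ) ≤ 1 - M)]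
      have e2 : Real.sqrt ((-(1-β)*(1-M)^2 + η*(1+M))^2) = -(-(1-β)*(1-M)^2 + η*(1+M)) := by
        rw [Real.sqrt_sq_eq_abs, abs_of_nonpos hdvle]
      rw [e1, ← e2]
      apply Real.sqrt_le_sqrt
      have hI := hIdent β
      have h4 : 0 ≤ 4*η^2*M := by positivity
      linarith
    have hrw : 2*(-(1-β)*(1-M)^2 + η*(1+M))/(2*Real.sqrt (D β))
        = (-(1-β)*(1-M)^2 + η*(1+M)) / Real.sqrt (D β) := by
      field_simp
    rw [hrw]
    have hdiv : (-(1-β)*(1-M)^2 + η*(1+M)) / Real.sqrt (D β) ≤ -(1-M) := by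
      rw [div_le_iff₀ hq0]
      nlinarith
    linarith
  have hcont : Continuous f := by
    have hffun : f = fun b => ((1-η+M*(1-b)) + b + Real.sqrt (D b))/2 := funext hf
    have hDfun : D = fun b => ((1-b)*(1+M) - η)^2 - 4*M*(1-b)^2 := funext hD
    rw [hffun, hDfun]
    fun_prop
  have hanti : AntitoneOn f (Set.Iic β₀) := by
    apply antitoneOn_of_deriv_nonpos (convex_Iic β₀) hcont.continuousOn
    · intro x hx
      rw [interior_Iic] at hx
      exact (hkey x hx).1.differentiableWithinAt
    · intro x hx
      rw [interior_Iic] at hx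
      exact (hkey x hx).2
  intro β hβ
  rcases lt_or_eq_of_le hβ.2 with h | h
  · exact (hkey β h).2
  · subst h
    by_cases hdf : DifferentiableAt ℝ f β
    · have hslope := hasDerivAt_iff_tendsto_slope.mp hdf.hasDerivAt
      have hlt : Tendsto (slope f β) (𝓝[<] β) (𝓝 (deriv f β)) :=
        hslope.mono_left (nhdsWithin_mono β fun y hy => ne_of_lt hy)
      refine le_of_tendsto hlt ?_
      filter_upwards [self_mem_nhdsWithin] with y hy
      have hy' : y < β := hy
      have hfy : f β ≤ f y := hanti hy'.le (le_refl β) hy'.le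
      rw [slope_def_field]
      apply div_nonpos_of_nonneg_of_nonpos <;> linarith
    · rw [deriv_zero_of_not_differentiableAt hdf]
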